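/- Let S_1, …, S_n be locally compact second countable groups, and for each i let (Y_i, ν_i) be a σ-finite standard measure space equipped with a measurable, measure-class-preserving S_i-action that is metrically ergodic. Then the coordinatewise product action of S_1 × ⋯ × S_n on (Y_1 × ⋯ × Y_n, ν_1 × ⋯ × ν_n) is metrically ergodic. -/

import Mathlib

open MeasureTheory TopologicalSpace

/-- An action of a topological group `S` on a measure space `(Y, ν)` is *metrically ergodic*
if for every separable metric space `V` equipped with a continuous `S`-action by isometries,
every measurable `S`-equivariant map `Y → V` is essentially constant. -/
def MetricallyErgodic (S : Type*) [Group S] [TopologicalSpace S]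
    (Y : Type*) [MeasurableSpace Y] [MulAction S Y] (ν : Measure Y) : Prop :=
  ∀ (V : Type) [MetricSpace V] [MeasurableSpace V] [BorelSpace V] [MulAction S V],
    SeparableSpace V →
    Continuous (fun p : S × V => p.1 • p.2) →
    (∀ s : S, Isometry fun v : V => s • v) →
    ∀ f : Y → V, Measurable f →
      (∀ s : S, ∀ᵐ y ∂ν, f (s • y) = s • f y) →
      ∃ v : V, ∀ᵐ y ∂ν, f y = v


open ENNReal Filter Topology

namespace ME

variable {X V : Type} [MeasurableSpace X] [MetricSpace V] [MeasurableSpace V] [BorelSpace V]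
  [SecondCountableTopology V] {ρ : Measure X} [IsFiniteMeasure ρ]

noncomputable def qd (ρ : Measure X) (f g : X → V) : ℝ≥0∞ :=
  ∫⁻ x, min 1 (edist (f x) (g x)) ∂ρ

lemma qd_lt_top (f g : X → V) : qd ρ f g < ⊤ :=
  lt_of_le_of_lt (lintegral_mono fun x => min_le_left _ _)
    (by simpa using measure_lt_top ρ Set.univ)

lemma qd_congr {f f' g g' : X → V} (hf : f =ᵐ[ρ] f') (hg : g =ᵐ[ρ] g') :
    qd ρ f g = qd ρ f' g' := by
  refine lintegral_congr_ae ?_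
  filter_upwards [hf, hg] with x h1 h2
  rw [h1, h2]

lemma min_one_add (a b : ℝ≥0∞) : min 1 (a + b) ≤ min 1 a + min 1 b := by
  rcases le_total 1 a with h | h
  · calc min 1 (a + b) ≤ 1 := min_le_left _ _
    _ ≤ min 1 a + min 1 b := le_add_right (le_min le_rfl h)
  rcases le_total 1 b with h' | h'
  · calc min 1 (a + b) ≤ 1 := min_le_left _ _
    _ ≤ min 1 a + min 1 b := le_add_left (le_min le_rfl h')
  · calc min 1 (a + b) ≤ a + b := min_le_right _ _
    _ ≤ min 1 a + min 1 b := add_le_add (le_min h le_rfl) (le_min h' le_rfl)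

lemma qd_triangle (f g h : X → V) (hf : Measurable f) (hg : Measurable g) :
    qd ρ f h ≤ qd ρ f g + qd ρ g h := by
  rw [qd, qd, qd, ← lintegral_add_left' (measurable_const.min (hf.edist hg)).aemeasurable]
  · refine lintegral_mono fun x => ?_
    calc min 1 (edist (f x) (h x)) ≤ min 1 (edist (f x) (g x) + edist (g x) (h x)) := by
          exact min_le_min le_rfl (edist_triangle _ _ _)
    _ ≤ _ := min_one_add _ _

noncomputable instance : Dist (X →ₘ[ρ] V) := ⟨fun φ ψ => (qd ρ φ ψ).toReal⟩

lemma L0dist_def (φ ψ : X →ₘ[ρ] V) : dist φ ψ = (qd ρ φ ψ).toReal := rfl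

lemma L0dist_mk_mk (f g : X → V) (hf hg) :
    dist (AEEqFun.mk f hf : X →ₘ[ρ] V) (AEEqFun.mk g hg) = (qd ρ f g).toReal := by
  rw [L0dist_def, qd_congr (AEEqFun.coeFn_mk f hf) (AEEqFun.coeFn_mk g hg)]

noncomputable instance : MetricSpace (X →ₘ[ρ] V) where
  dist_self φ := by simp [L0dist_def, qd]
  dist_comm φ ψ := by simp [L0dist_def, qd, edist_comm]
  dist_triangle φ ψ χ := by
    rw [L0dist_def, L0dist_def, L0dist_def,
      ← ENNReal.toReal_add (qd_lt_top _ _).ne (qd_lt_top _ _).ne]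
    exact ENNReal.toReal_mono (by simp [(qd_lt_top _ _).ne, (qd_lt_top _ _).ne])
      (qd_triangle _ _ _ φ.measurable ψ.measurable)
  eq_of_dist_eq_zero := by
    intro φ ψ h
    rw [L0dist_def] at h
    have h0 : qd ρ φ ψ = 0 := by
      have := (ENNReal.toReal_eq_zero_iff _).1 h
      exact this.resolve_right (qd_lt_top _ _).ne
    rw [qd, lintegral_eq_zero_iff'] at h0
    · refine AEEqFun.ext ?_
      filter_upwards [h0] with x hx
      simp only [Pi.zero_apply] at hx
      have hx' : edist (φ x) (ψ x) = 0 := by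
        by_contra hne
        exact absurd hx (ne_of_gt (lt_min zero_lt_one (pos_iff_ne_zero.2 hne)))
      exact edist_eq_zero.1 hx'
    · exact (measurable_const.min (φ.measurable.edist ψ.measurable)).aemeasurable

/-- bound by measure of a set off which the functions agree -/
lemma qd_le_measure {f g : X → V} {D : Set X} (hD : MeasurableSet D)
    (h : ∀ x, f x ≠ g x → x ∈ D) : qd ρ f g ≤ ρ D := by
  calc qd ρ f g ≤ ∫⁻ x, D.indicator (fun _ => 1) x ∂ρ := by
        refine lintegral_mono fun x => ?_
        by_cases hx : f x = g x
        · simp [qd, hx]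
        · simp [Set.indicator_of_mem (h x hx), min_le_left]
  _ = ρ D := by rw [lintegral_indicator hD]; simp

/-- measurability into a separable metric space via distance functions -/
lemma measurable_into_metric {α β : Type*} [MeasurableSpace α] [MetricSpace β]
    [MeasurableSpace β] [BorelSpace β] [SeparableSpace β] {F : α → β}
    (h : ∀ b : β, Measurable fun a => dist (F a) b) : Measurable F := by
  obtain ⟨D, hDc, hDd⟩ := exists_countable_dense β
  haveI : Countable D := hDc.to_subtype
  refine measurable_of_isOpen fun U hU => ?_
  have : F ⁻¹' U = ⋃ (p : D × ℚ) (_ : 0 < (p.2 : ℝ) ∧ Metric.ball (p.1 : β) p.2 ⊆ U),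
      {a | dist (F a) p.1 < p.2} := by
    ext a
    simp only [Set.mem_preimage, Set.mem_iUnion, Set.mem_setOf_eq]
    constructor
    · intro ha
      obtain ⟨ε, hε, hball⟩ := Metric.isOpen_iff.1 hU _ ha
      obtain ⟨c, hcD, hc⟩ : ∃ c ∈ D, dist (F a) c < ε / 3 := by
        have := Metric.dense_iff.1 hDd (F a) (ε / 3) (by linarith)
        obtain ⟨c, hc1, hc2⟩ := this
        exact ⟨c, hc2, by rwa [Metric.mem_ball, dist_comm] at hc1⟩
      obtain ⟨q, hq1, hq2⟩ := exists_rat_btwn (show ε / 3 < ε / 2 by linarith)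
      refine ⟨⟨⟨c, hcD⟩, q⟩, ⟨by linarith, fun z hz => hball ?_⟩, by exact lt_trans hc hq1⟩
      rw [Metric.mem_ball] at hz ⊢
      calc dist z (F a) ≤ dist z c + dist c (F a) := dist_triangle _ _ _
      _ < q + ε / 3 := by rw [dist_comm c (F a)]; exact add_lt_add hz hc
      _ < ε := by linarith
    · rintro ⟨⟨⟨c, hcD⟩, q⟩, ⟨hq, hball⟩, hd⟩
      exact hball (by rwa [Metric.mem_ball])
  rw [this]
  exact MeasurableSet.iUnion fun p => MeasurableSet.iUnion fun _ =>
    measurableSet_lt (h _) measurable_const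

open Classical in
noncomputable def layered (v₀ : V) (u : ℕ → V) : List (Set X × ℕ) → X → V
  | [], _ => v₀
  | (A, k) :: L, x => if x ∈ A then u k else layered v₀ u L x

lemma layered_measurable (v₀ : V) (u : ℕ → V) (L : List (Set X × ℕ))
    (hL : ∀ p ∈ L, MeasurableSet p.1) : Measurable (layered v₀ u L) := by
  induction L with
  | nil => exact measurable_const
  | cons p L ih =>
    obtain ⟨A, k⟩ := p
    simp only [layered]
    exact Measurable.ite (hL (A, k) (List.mem_cons_self)) measurable_const
      (ih fun q hq => hL q (List.mem_cons_of_mem _ hq))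

lemma layered_fiber (v₀ : V) (u : ℕ → V) (k : V → ℕ) (s : X → V) (x : X)
    (l : List V) (hk : ∀ v ∈ l, u (k v) = v) (hx : s x ∈ l) :
    layered v₀ u (l.map fun v => (s ⁻¹' {v}, k v)) x = s x := by
  induction l with
  | nil => simp at hx
  | cons v l ih =>
    simp only [List.map_cons, layered]
    by_cases hv : s x = v
    · rw [if_pos (show x ∈ s ⁻¹' {v} from hv), hk v (List.mem_cons_self), hv]
    · rw [if_neg (show x ∉ s ⁻¹' {v} from hv)]
      exact ih (fun w hw => hk w (List.mem_cons_of_mem _ hw))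
        ((List.mem_cons.1 hx).resolve_left hv)

lemma layered_congr (v₀ : V) (u : ℕ → V) (t : List (Set X × Set X × ℕ)) (x : X)
    (hx : ∀ p ∈ t, x ∉ symmDiff p.1 p.2.1) :
    layered v₀ u (t.map fun p => (p.1, p.2.2)) x = layered v₀ u (t.map fun p => (p.2.1, p.2.2)) x := by
  induction t with
  | nil => rfl
  | cons p t ih =>
    obtain ⟨A, B, k⟩ := p
    have hAB : x ∈ A ↔ x ∈ B := by
      have := hx _ (List.mem_cons_self)
      simp only [Set.mem_symmDiff] at this
      push_neg at this
      exact ⟨this.1, this.2⟩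
    simp only [List.map_cons, layered]
    by_cases hA : x ∈ A
    · rw [if_pos hA, if_pos (hAB.1 hA)]
    · rw [if_neg hA, if_neg (fun h => hA (hAB.2 h))]
      exact ih fun q hq => hx q (List.mem_cons_of_mem _ hq)


lemma L0dist_mk_right (φ : X →ₘ[ρ] V) (g : X → V) (hg) :
    dist φ (AEEqFun.mk g hg : X →ₘ[ρ] V) = (qd ρ φ g).toReal := by
  conv_lhs => rw [← AEEqFun.mk_coeFn φ]
  rw [L0dist_mk_mk]

theorem L0_separable [MeasurableSpace.CountablyGenerated X] :
    SeparableSpace (X →ₘ[ρ] V) := by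
  rcases isEmpty_or_nonempty V with hV | hV
  · haveI : Subsingleton (X →ₘ[ρ] V) :=
      ⟨fun φ ψ => AEEqFun.ext (Eventually.of_forall fun x => Subsingleton.elim _ _)⟩
    exact ⟨⟨Set.univ, Set.countable_univ, dense_univ⟩⟩
  haveI : SeparableSpace V := inferInstance
  set u : ℕ → V := TopologicalSpace.denseSeq V with hu_def
  have hu : DenseRange u := TopologicalSpace.denseRange_denseSeq V
  set v₀ : V := u 0
  obtain ⟨𝒜, h𝒜c, h𝒜⟩ := exists_countable_measureDense (μ := ρ)
  haveI : Countable ↥𝒜 := h𝒜c.to_subtype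
  set emb : List (↥𝒜 × ℕ) → (X →ₘ[ρ] V) := fun L =>
    AEEqFun.mk (layered v₀ u (L.map fun p => ((p.1 : Set X), p.2)))
      ((layered_measurable v₀ u _ (by
        intro p hp
        simp only [List.mem_map] at hp
        obtain ⟨q, _, rfl⟩ := hp
        exact h𝒜.measurable _ q.1.2)).aestronglyMeasurable) with hemb_def
  have key : ∀ (φ : X →ₘ[ρ] V) (ε : ℝ), 0 < ε → ∃ L, dist φ (emb L) < ε := by
    intro φ ε hε
    haveI : Countable ↥(Set.range u) := (Set.countable_range u).to_subtype
    haveI : SeparableSpace ↥(Set.range u) := ⟨⟨Set.univ, Set.countable_univ, dense_univ⟩⟩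
    set a : ℕ → SimpleFunc X V :=
      SimpleFunc.approxOn φ φ.measurable (Set.range u) v₀ ⟨0, rfl⟩ with ha_def
    have ha_mem : ∀ n x, a n x ∈ Set.range u := fun n x =>
      SimpleFunc.approxOn_mem φ.measurable _ n x
    have ha_tend : Tendsto (fun n => qd ρ (φ : X → V) (a n)) atTop (𝓝 0) := by
      have h0 : (0:ℝ≥0∞) = ∫⁻ _x, 0 ∂ρ := by simp
      rw [h0]
      refine tendsto_lintegral_of_dominated_convergence (fun _ => 1)
        (fun m => measurable_const.min (φ.measurable.edist (a m).measurable))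
        (fun m => Eventually.of_forall fun x => min_le_left _ _) (by simp) ?_
      refine Eventually.of_forall fun x => ?_
      have hx : Tendsto (fun m => a m x) atTop (𝓝 (φ x)) :=
        SimpleFunc.tendsto_approxOn φ.measurable _ (by rw [hu.closure_range]; trivial)
      have h1 : Tendsto (fun m => edist (φ x) (a m x)) atTop (𝓝 0) := by
        have := Filter.Tendsto.edist (tendsto_const_nhds (x := φ x) (f := atTop)) hx
        simpa [edist_self] using this
      exact tendsto_of_tendsto_of_tendsto_of_le_of_le tendsto_const_nhds h1
        (fun m => zero_le) (fun m => min_le_right _ _)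
    have ha_tendR : Tendsto
        (fun m => dist φ (AEEqFun.mk (a m : X → V) ((a m).measurable.aestronglyMeasurable)))
        atTop (𝓝 0) := by
      simp_rw [L0dist_mk_right]
      have := (ENNReal.tendsto_toReal (a := 0) (by simp)).comp ha_tend
      simpa [Function.comp_def] using this
    obtain ⟨n, hn⟩ := (ha_tendR.eventually_lt_const (half_pos hε)).exists
    set s := a n with hs_def
    set l := s.range.toList with hl
    have hmem : ∀ x, s x ∈ l := fun x => by
      rw [hl, Finset.mem_toList]; exact s.mem_range_self x
    have hvalr : ∀ v ∈ l, v ∈ Set.range u := by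
      intro v hv
      rw [hl, Finset.mem_toList, SimpleFunc.mem_range] at hv
      obtain ⟨x, rfl⟩ := hv
      exact ha_mem n x
    classical
    set k : V → ℕ := fun v => if h : ∃ m, u m = v then h.choose else 0 with hk_def
    have hk : ∀ v ∈ l, u (k v) = v := by
      intro v hv
      have hex : ∃ m, u m = v := hvalr v hv
      rw [hk_def]
      simp only [dif_pos hex]
      exact hex.choose_spec
    set δ := ε / 2 / (l.length + 1) with hδdef
    have hδpos : 0 < δ := by positivity
    have hchoice : ∀ v : V, ∃ B ∈ 𝒜, ρ (symmDiff (s ⁻¹' {v}) B) < ENNReal.ofReal δ := fun v =>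
      h𝒜.approx _ (s.measurableSet_fiber v) (measure_ne_top ρ _) δ hδpos
    choose B hB𝒜 hBd using hchoice
    set L : List (↥𝒜 × ℕ) := l.map fun v => (⟨B v, hB𝒜 v⟩, k v) with hLdef
    have hlist : (L.map fun p => ((p.1 : Set X), p.2)) = l.map fun v => (B v, k v) := by
      rw [hLdef, List.map_map]
      rfl
    have hgBmeas : Measurable (layered v₀ u (l.map fun v => (B v, k v))) := by
      refine layered_measurable v₀ u _ ?_
      intro p hp
      simp only [List.mem_map] at hp
      obtain ⟨v, _, rfl⟩ := hp
      exact h𝒜.measurable _ (hB𝒜 v)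
    have hembL : emb L = AEEqFun.mk (layered v₀ u (l.map fun v => (B v, k v)))
        hgBmeas.aestronglyMeasurable := by
      rw [hemb_def]
      exact AEEqFun.mk_eq_mk.2 (Eventually.of_forall fun x => by rw [hlist])
    -- the fiber representation of s
    have hfib : ∀ x, layered v₀ u (l.map fun v => (s ⁻¹' {v}, k v)) x = s x := fun x =>
      layered_fiber v₀ u k s x l hk (hmem x)
    set E : V → Set X := fun v => symmDiff (s ⁻¹' {v}) (B v) with hE
    set D : Set X := ⋃ v ∈ (s.range : Finset V), E v with hD_def
    have hDmeas : MeasurableSet D := by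
      refine MeasurableSet.biUnion (s.range : Finset V).countable_toSet fun v _ => ?_
      exact (s.measurableSet_fiber v).symmDiff (h𝒜.measurable _ (hB𝒜 v))
    have hsub : ∀ x, layered v₀ u (l.map fun v => (s ⁻¹' {v}, k v)) x
        ≠ layered v₀ u (l.map fun v => (B v, k v)) x → x ∈ D := by
      intro x hx
      by_contra hxD
      refine hx ?_
      have := layered_congr v₀ u (l.map fun v => (s ⁻¹' {v}, B v, k v)) x ?_
      · rw [List.map_map, List.map_map] at this
        exact this
      · intro p hp
        simp only [List.mem_map] at hp
        obtain ⟨v, hvl, rfl⟩ := hp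
        intro hxE
        refine hxD ?_
        rw [hD_def]
        exact Set.mem_biUnion (Finset.mem_toList.1 hvl) hxE
    have hqd : qd ρ (s : X → V) (layered v₀ u (l.map fun v => (B v, k v))) ≤ ρ D := by
      have h1 : qd ρ (s : X → V) (layered v₀ u (l.map fun v => (B v, k v)))
          = qd ρ (layered v₀ u (l.map fun v => (s ⁻¹' {v}, k v)))
            (layered v₀ u (l.map fun v => (B v, k v))) :=
        qd_congr (Eventually.of_forall fun x => (hfib x).symm) (EventuallyEq.refl _ _)
      rw [h1]
      exact qd_le_measure hDmeas hsub
    have hsum : (ρ D).toReal < ε / 2 := by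
      have h2 : ρ D ≤ ∑ v ∈ s.range, ρ (E v) := measure_biUnion_finset_le _ _
      have h3 : (ρ D).toReal ≤ ∑ v ∈ s.range, (ρ (E v)).toReal := by
        rw [← ENNReal.toReal_sum (fun v _ => measure_ne_top ρ _)]
        exact ENNReal.toReal_mono (ENNReal.sum_lt_top.2 fun v _ => measure_lt_top ρ _).ne h2
      have h4 : ∑ v ∈ s.range, (ρ (E v)).toReal ≤ s.range.card • δ :=
        Finset.sum_le_card_nsmul _ _ δ fun v _ => (ENNReal.toReal_lt_of_lt_ofReal (hBd v)).le
      have h5 : (s.range.card : ℝ) * δ < ε / 2 := by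
        have hcard : s.range.card = l.length := (Finset.length_toList _).symm
        have h6 : ((l.length : ℝ)) / (l.length + 1) < 1 :=
          (div_lt_one (by positivity)).2 (by linarith [Nat.cast_nonneg (α := ℝ) l.length])
        calc (s.range.card : ℝ) * δ = (ε/2) * ((l.length : ℝ) / (l.length + 1)) := by
              rw [hcard, hδdef]; ring
        _ < (ε/2) * 1 := mul_lt_mul_of_pos_left h6 (half_pos hε)
        _ = ε/2 := mul_one _
      calc (ρ D).toReal ≤ ∑ v ∈ s.range, (ρ (E v)).toReal := h3
      _ ≤ s.range.card • δ := h4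
      _ = (s.range.card : ℝ) * δ := nsmul_eq_mul _ _
      _ < ε / 2 := h5
    refine ⟨L, ?_⟩
    have hd2 : dist (AEEqFun.mk (s : X → V) (s.measurable.aestronglyMeasurable) : X →ₘ[ρ] V)
        (emb L) < ε / 2 := by
      rw [hembL, L0dist_mk_mk]
      exact lt_of_le_of_lt (ENNReal.toReal_mono (measure_ne_top ρ _) hqd) hsum
    calc dist φ (emb L)
        ≤ dist φ (AEEqFun.mk (s : X → V) (s.measurable.aestronglyMeasurable)) +
          dist (AEEqFun.mk (s : X → V) (s.measurable.aestronglyMeasurable) : X →ₘ[ρ] V)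
            (emb L) := dist_triangle _ _ _
    _ < ε / 2 + ε / 2 := add_lt_add hn hd2
    _ = ε := add_halves ε
  exact ⟨⟨Set.range emb, Set.countable_range _,
    Metric.denseRange_iff.2 fun φ r hr => key φ r hr⟩⟩

lemma measurableSet_eqSet {α : Type*} [MeasurableSpace α] {h1 h2 : α → V}
    (m1 : Measurable h1) (m2 : Measurable h2) : MeasurableSet {x | h1 x = h2 x} := by
  have : {x | h1 x = h2 x} = (fun x => (h1 x, h2 x)) ⁻¹' (Set.diagonal V) := by
    ext x; simp [Set.diagonal, eq_comm]
  rw [this]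
  exact (m1.prodMk m2) (isClosed_diagonal.measurableSet)

theorem twoFactor
    {G₁ G₂ : Type} [Group G₁] [TopologicalSpace G₁] [FirstCountableTopology G₁]
    [Group G₂] [TopologicalSpace G₂]
    {Y₁ Y₂ : Type} [MeasurableSpace Y₁] [MeasurableSpace Y₂]
    [MeasurableSpace.CountablyGenerated Y₂]
    (μ₁ : Measure Y₁) (μ₂ : Measure Y₂) [SigmaFinite μ₁] [SigmaFinite μ₂]
    [MulAction G₁ Y₁] [MulAction G₂ Y₂]
    (hq₂ : ∀ s : G₂, Measure.QuasiMeasurePreserving (fun y : Y₂ => s • y) μ₂ μ₂)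
    (hme₁ : MetricallyErgodic G₁ Y₁ μ₁) (hme₂ : MetricallyErgodic G₂ Y₂ μ₂)
    (hne₁ : Nonempty Y₁) (hne₂ : Nonempty Y₂)
    (V : Type) [MetricSpace V] [MeasurableSpace V] [BorelSpace V] [MulAction (G₁ × G₂) V]
    (hsep : SeparableSpace V)
    (hC : Continuous fun p : (G₁ × G₂) × V => p.1 • p.2)
    (hiso : ∀ s : G₁ × G₂, Isometry fun v : V => s • v)
    (f : Y₁ × Y₂ → V) (hf : Measurable f)
    (heq : ∀ s : G₁ × G₂, ∀ᵐ p ∂μ₁.prod μ₂, f (s.1 • p.1, s.2 • p.2) = s • f p) :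
    ∃ v : V, ∀ᵐ p ∂μ₁.prod μ₂, f p = v := by
  haveI : SecondCountableTopology V := UniformSpace.secondCountable_of_separable V
  have hVne : Nonempty V := ⟨f (Classical.arbitrary _, Classical.arbitrary _)⟩
  by_cases hzero : μ₁ = 0 ∨ μ₂ = 0
  · obtain ⟨v⟩ := hVne
    refine ⟨v, ?_⟩
    rcases hzero with h | h <;> simp [h]
  push_neg at hzero
  obtain ⟨hμ₁, hμ₂⟩ := hzero
  set ρ := μ₂.toFinite with hρdef
  have hae : ae ρ = ae μ₂ := ae_toFinite (μ := μ₂)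
  have hcont : ∀ s : G₁ × G₂, Continuous fun v : V => s • v := fun s => (hiso s).continuous
  -- the space V' of a.e.-classes of maps Y₂ → V
  letI : MeasurableSpace (Y₂ →ₘ[ρ] V) := borel _
  haveI : BorelSpace (Y₂ →ₘ[ρ] V) := ⟨rfl⟩
  letI : SMul G₁ (Y₂ →ₘ[ρ] V) :=
    ⟨fun t φ => AEEqFun.comp (fun v => ((t, (1:G₂)) : G₁ × G₂) • v) (hcont _) φ⟩
  have smul_coe : ∀ (t : G₁) (φ : Y₂ →ₘ[ρ] V),
      (t • φ : Y₂ →ₘ[ρ] V) =ᵐ[ρ] fun y => ((t, (1:G₂)) : G₁ × G₂) • φ y := fun t φ =>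
    AEEqFun.coeFn_comp _ _ _
  letI : MulAction G₁ (Y₂ →ₘ[ρ] V) :=
    { one_smul := fun φ => by
        refine AEEqFun.ext ?_
        filter_upwards [smul_coe 1 φ] with y h
        rw [h]
        exact one_smul _ _
      mul_smul := fun t t' φ => by
        refine AEEqFun.ext ?_
        filter_upwards [smul_coe (t * t') φ, smul_coe t (t' • φ), smul_coe t' φ] with y h1 h2 h3
        rw [h1, h2, h3, ← mul_smul]
        congr 1
        rw [Prod.mk_mul_mk, mul_one] }
  have hiso' : ∀ t : G₁, Isometry fun φ : Y₂ →ₘ[ρ] V => t • φ := by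
    intro t
    refine Isometry.of_dist_eq fun φ ψ => ?_
    rw [L0dist_def, L0dist_def, qd_congr (smul_coe t φ) (smul_coe t ψ)]
    congr 1
    refine lintegral_congr fun y => ?_
    rw [hiso (t, (1:G₂)) (φ y) (ψ y)]
  -- continuity of the action of G₁ on V'
  have hCont' : Continuous fun p : G₁ × (Y₂ →ₘ[ρ] V) => p.1 • p.2 := by
    rw [continuous_iff_seqContinuous]
    intro x p hx
    have hx1 : Tendsto (fun n => (x n).1) atTop (𝓝 p.1) := (continuous_fst.tendsto p).comp hx
    have hx2 : Tendsto (fun n => dist (x n).2 p.2) atTop (𝓝 0) :=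
      tendsto_iff_dist_tendsto_zero.1 ((continuous_snd.tendsto p).comp hx)
    have hterm2 : Tendsto (fun n => dist ((x n).1 • p.2 : Y₂ →ₘ[ρ] V) (p.1 • p.2)) atTop (𝓝 0) := by
      have hrep : ∀ t : G₁, dist (t • p.2 : Y₂ →ₘ[ρ] V) (p.1 • p.2)
          = (∫⁻ y, min 1 (edist (((t, (1:G₂)) : G₁ × G₂) • p.2 y)
              (((p.1, (1:G₂)) : G₁ × G₂) • p.2 y)) ∂ρ).toReal := by
        intro t
        rw [L0dist_def, qd_congr (smul_coe t p.2) (smul_coe p.1 p.2)]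
        rfl
      simp_rw [hrep]
      have hlim : Tendsto (fun n => ∫⁻ y, min 1 (edist ((((x n).1, (1:G₂)) : G₁ × G₂) • p.2 y)
          (((p.1, (1:G₂)) : G₁ × G₂) • p.2 y)) ∂ρ) atTop (𝓝 0) := by
        have h0 : (0:ℝ≥0∞) = ∫⁻ _y, 0 ∂ρ := by simp
        rw [h0]
        refine tendsto_lintegral_of_dominated_convergence (fun _ => 1)
          (fun m => measurable_const.min ((((hcont _).measurable.comp
            p.2.measurable)).edist ((hcont _).measurable.comp p.2.measurable)))
          (fun m => Eventually.of_forall fun y => min_le_left _ _) (by simp) ?_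
        refine Eventually.of_forall fun y => ?_
        have h1 : Tendsto (fun n => ((((x n).1, (1:G₂)) : G₁ × G₂), p.2 y)) atTop
            (𝓝 (((p.1, (1:G₂)) : G₁ × G₂), p.2 y)) :=
          ((hx1.prodMk_nhds tendsto_const_nhds).prodMk_nhds tendsto_const_nhds)
        have h2 : Tendsto (fun n => (((x n).1, (1:G₂)) : G₁ × G₂) • p.2 y) atTop
            (𝓝 ((((p.1, (1:G₂)) : G₁ × G₂)) • p.2 y)) := (hC.tendsto _).comp h1
        have h3 : Tendsto (fun n => edist ((((x n).1, (1:G₂)) : G₁ × G₂) • p.2 y)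
            (((p.1, (1:G₂)) : G₁ × G₂) • p.2 y)) atTop (𝓝 0) := by
          have := h2.edist (tendsto_const_nhds (x := (((p.1, (1:G₂)) : G₁ × G₂)) • p.2 y)
            (f := atTop))
          simpa [edist_self] using this
        exact tendsto_of_tendsto_of_tendsto_of_le_of_le tendsto_const_nhds h3
          (fun m => zero_le) (fun m => min_le_right _ _)
      have := (ENNReal.tendsto_toReal (a := 0) (by simp)).comp hlim
      simpa [Function.comp_def] using this
    rw [tendsto_iff_dist_tendsto_zero]
    refine squeeze_zero (g := fun n => dist (x n).2 p.2 +
      dist ((x n).1 • p.2 : Y₂ →ₘ[ρ] V) (p.1 • p.2)) (fun n => dist_nonneg) (fun n => ?_) ?_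
    · calc dist ((x n).1 • (x n).2 : Y₂ →ₘ[ρ] V) (p.1 • p.2)
          ≤ dist ((x n).1 • (x n).2 : Y₂ →ₘ[ρ] V) ((x n).1 • p.2) +
            dist ((x n).1 • p.2 : Y₂ →ₘ[ρ] V) (p.1 • p.2) := dist_triangle _ _ _
      _ = dist (x n).2 p.2 + dist ((x n).1 • p.2 : Y₂ →ₘ[ρ] V) (p.1 • p.2) := by
            rw [(hiso' (x n).1).dist_eq]
    · simpa using hx2.add hterm2
  -- the slice map F
  have hslice : ∀ y₁ : Y₁, Measurable fun y₂ => f (y₁, y₂) := fun y₁ =>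
    hf.comp measurable_prodMk_left
  set F : Y₁ → (Y₂ →ₘ[ρ] V) := fun y₁ =>
    AEEqFun.mk (fun y₂ => f (y₁, y₂)) (hslice y₁).aestronglyMeasurable with hF_def
  have hFdist : ∀ (y₁ : Y₁) (ψ : Y₂ →ₘ[ρ] V),
      dist (F y₁) ψ = (∫⁻ y₂, min 1 (edist (f (y₁, y₂)) (ψ y₂)) ∂ρ).toReal := by
    intro y₁ ψ
    conv_lhs => rw [← AEEqFun.mk_coeFn ψ]
    rw [hF_def, L0dist_mk_mk]
    rfl
  have hFmeas : Measurable F := by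
    haveI : SeparableSpace (Y₂ →ₘ[ρ] V) := L0_separable
    refine measurable_into_metric fun ψ => ?_
    simp_rw [hFdist]
    refine ENNReal.measurable_toReal.comp ?_
    exact Measurable.lintegral_prod_right'
      (f := fun p : Y₁ × Y₂ => min 1 (edist (f p) (ψ p.2)))
      (measurable_const.min (hf.edist (ψ.measurable.comp measurable_snd)))
  have hFeq : ∀ t : G₁, ∀ᵐ y₁ ∂μ₁, F (t • y₁) = t • F y₁ := by
    intro t
    have h1 := Measure.ae_ae_of_ae_prod (heq (t, (1:G₂)))
    filter_upwards [h1] with y₁ h2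
    have h3 : ∀ᵐ y₂ ∂ρ, f (t • y₁, y₂) = ((t, (1:G₂)) : G₁ × G₂) • f (y₁, y₂) := by
      rw [hae]
      filter_upwards [h2] with y₂ h4
      simpa [one_smul] using h4
    have h5 : (t • F y₁ : Y₂ →ₘ[ρ] V)
        = AEEqFun.mk (fun y₂ => ((t, (1:G₂)) : G₁ × G₂) • f (y₁, y₂))
          ((((hcont _).measurable.comp (hslice y₁))).aestronglyMeasurable) := by
      show AEEqFun.comp _ (hcont _) (F y₁) = _
      rw [hF_def]
      rw [AEEqFun.comp_mk]
      exact AEEqFun.mk_eq_mk.2 (Eventually.of_forall fun y => rfl)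
    rw [h5, hF_def]
    exact AEEqFun.mk_eq_mk.2 h3
  haveI : SeparableSpace (Y₂ →ₘ[ρ] V) := L0_separable
  obtain ⟨φ₀, hφ₀⟩ := hme₁ (Y₂ →ₘ[ρ] V) inferInstance hCont' hiso' F hFmeas hFeq
  set g : Y₂ → V := ⇑φ₀ with hg_def
  have hgmeas : Measurable g := φ₀.measurable
  -- f p = g p.2 a.e.
  have hinner : ∀ᵐ y₁ ∂μ₁, ∀ᵐ y₂ ∂μ₂, f (y₁, y₂) = g y₂ := by
    filter_upwards [hφ₀] with y₁ h1
    rw [← hae]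
    have h2 : (F y₁ : Y₂ → V) =ᵐ[ρ] fun y₂ => f (y₁, y₂) := AEEqFun.coeFn_mk _ _
    filter_upwards [h2] with y₂ h3
    rw [← h3, h1]
  have hset : MeasurableSet {p : Y₁ × Y₂ | f p = g p.2} :=
    measurableSet_eqSet hf (hgmeas.comp measurable_snd)
  have hgf : ∀ᵐ p ∂μ₁.prod μ₂, f p = g p.2 := (Measure.ae_prod_iff_ae_ae hset).2 hinner
  -- equivariance of g under G₂
  have hgeq : ∀ t : G₂, ∀ᵐ y₂ ∂μ₂, g (t • y₂) = (((1:G₁), t) : G₁ × G₂) • g y₂ := by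
    intro t
    have hT : Measure.QuasiMeasurePreserving (fun p : Y₁ × Y₂ => (p.1, t • p.2))
        (μ₁.prod μ₂) (μ₁.prod μ₂) := by
      refine ⟨measurable_fst.prodMk ((hq₂ t).measurable.comp measurable_snd), ?_⟩
      have hmap : (μ₁.prod μ₂).map (fun p : Y₁ × Y₂ => (p.1, t • p.2))
          = (μ₁.map id).prod (μ₂.map fun y => t • y) :=
        (Measure.map_prod_map μ₁ μ₂ measurable_id (hq₂ t).measurable).symm
      rw [hmap, Measure.map_id]
      exact Measure.AbsolutelyContinuous.prod (Measure.AbsolutelyContinuous.refl μ₁)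
        (hq₂ t).absolutelyContinuous
    have ha := heq ((1:G₁), t)
    have hb := hgf
    have hc := hT.ae hgf
    have hd : ∀ᵐ p ∂μ₁.prod μ₂, g (t • p.2) = (((1:G₁), t) : G₁ × G₂) • g p.2 := by
      filter_upwards [ha, hb, hc] with p h1 h2 h3
      simp only [one_smul] at h1
      rw [← h3, h1, h2]
    have hsetB : MeasurableSet {p : Y₁ × Y₂ | g (t • p.2) = (((1:G₁), t) : G₁ × G₂) • g p.2} :=
      measurableSet_eqSet (hgmeas.comp ((hq₂ t).measurable.comp measurable_snd))
        ((hcont _).measurable.comp (hgmeas.comp measurable_snd))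
    have he := (Measure.ae_prod_iff_ae_ae hsetB).1 hd
    haveI : (ae μ₁).NeBot := ae_neBot.2 hμ₁
    obtain ⟨y₁, hy₁⟩ := he.exists
    exact hy₁
  -- apply metric ergodicity of G₂ to g
  letI actV2 : MulAction G₂ V := MulAction.compHom V (MonoidHom.inr G₁ G₂)
  have hsmul2 : ∀ (t : G₂) (v : V), t • v = (((1:G₁), t) : G₁ × G₂) • v := fun t v => rfl
  have hC2 : Continuous fun p : G₂ × V => p.1 • p.2 := by
    have : (fun p : G₂ × V => p.1 • p.2)
        = fun p : G₂ × V => ((((1:G₁), p.1) : G₁ × G₂), p.2).1 • ((((1:G₁), p.1) : G₁ × G₂), p.2).2 := rfl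
    rw [this]
    exact hC.comp (((continuous_const.prodMk continuous_fst)).prodMk continuous_snd)
  have hiso2 : ∀ t : G₂, Isometry fun v : V => t • v := fun t => hiso ((1:G₁), t)
  obtain ⟨v, hv⟩ := hme₂ V hsep hC2 hiso2 g hgmeas hgeq
  refine ⟨v, ?_⟩
  have hsetC : MeasurableSet {p : Y₁ × Y₂ | g p.2 = v} :=
    measurableSet_eqSet (hgmeas.comp measurable_snd) measurable_const
  have hprodv : ∀ᵐ p ∂μ₁.prod μ₂, g p.2 = v :=
    (Measure.ae_prod_iff_ae_ae hsetC).2 (Eventually.of_forall fun _ => hv)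
  filter_upwards [hgf, hprodv] with p h1 h2
  rw [h1, h2]

lemma nonempty_of_me {S Y : Type*} [Group S] [TopologicalSpace S] [MeasurableSpace Y]
    [MulAction S Y] {ν : Measure Y} (h : MetricallyErgodic S Y ν) : Nonempty Y := by
  by_contra hY
  rw [not_nonempty_iff] at hY
  letI : MeasurableSpace Empty := ⊤
  haveI : BorelSpace Empty := by
    constructor
    ext s
    have hs : s = ∅ := by ext x; exact x.elim
    subst hs
    simp [MeasurableSet.empty]
  letI : MulAction S Empty :=
    { smul := fun _ e => e.elim
      one_smul := fun e => e.elim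
      mul_smul := fun _ _ e => e.elim }
  haveI hsepE : SeparableSpace Empty := ⟨⟨∅, Set.countable_empty, by
    intro x; exact x.elim⟩⟩
  have hCE : Continuous fun p : S × Empty => p.1 • p.2 := by
    rw [continuous_def]
    intro s _
    rw [Set.eq_empty_of_isEmpty ((fun p : S × Empty => p.1 • p.2) ⁻¹' s)]
    exact isOpen_empty
  have hisoE : ∀ s : S, Isometry fun v : Empty => s • v := fun s x => x.elim
  obtain ⟨v, -⟩ := h Empty hsepE hCE hisoE (fun y => (hY.false y).elim)
    (measurable_of_empty _) (fun s => Eventually.of_forall fun y => (hY.false y).elim)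
  exact v.elim

theorem qmp_pi (n : ℕ) :
    ∀ (Y : Fin n → Type) [∀ i, MeasurableSpace (Y i)]
      (ν : ∀ i, Measure (Y i)) [∀ i, SigmaFinite (ν i)] (T : ∀ i, Y i → Y i),
      (∀ i, Measure.QuasiMeasurePreserving (T i) (ν i) (ν i)) →
      Measure.QuasiMeasurePreserving (fun (y : ∀ i, Y i) (j : Fin n) => T j (y j))
        (Measure.pi ν) (Measure.pi ν) := by
  induction n with
  | zero =>
    intro Y _ ν _ T hT
    have : (fun (y : ∀ i, Y i) (j : Fin 0) => T j (y j)) = id := by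
      funext y
      exact funext fun j => j.elim0
    rw [this]
    exact Measure.QuasiMeasurePreserving.id _
  | succ n IH =>
    intro Y _ ν _ T hT
    set e := MeasurableEquiv.piFinSuccAbove Y 0 with he
    have mp := measurePreserving_piFinSuccAbove ν 0
    have hIH := IH (fun j => Y ((0 : Fin (n+1)).succAbove j))
      (fun j => ν ((0 : Fin (n+1)).succAbove j)) (fun j => T _) (fun j => hT _)
    have hP : Measure.QuasiMeasurePreserving
        (Prod.map (T 0) (fun (y : ∀ j, Y ((0 : Fin (n+1)).succAbove j)) (j : Fin n) => T _ (y j)))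
        ((ν 0).prod (Measure.pi fun j => ν ((0 : Fin (n+1)).succAbove j)))
        ((ν 0).prod (Measure.pi fun j => ν ((0 : Fin (n+1)).succAbove j))) := by
      refine ⟨((hT 0).measurable.comp measurable_fst).prodMk (hIH.measurable.comp measurable_snd), ?_⟩
      rw [← Measure.map_prod_map _ _ (hT 0).measurable hIH.measurable]
      exact Measure.AbsolutelyContinuous.prod (hT 0).absolutelyContinuous
        hIH.absolutelyContinuous
    have hcomp : (fun (y : ∀ i, Y i) (j : Fin (n+1)) => T j (y j))
        = e.symm ∘ (Prod.map (T 0) (fun (y : ∀ j, Y ((0 : Fin (n+1)).succAbove j)) (j : Fin n) => T _ (y j))) ∘ e := by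
      funext y
      apply funext
      refine Fin.succAboveCases 0 ?_ ?_
      · simp [e, MeasurableEquiv.piFinSuccAbove, Fin.insertNth_apply_same]
        rfl
      · intro j
        simp [e, MeasurableEquiv.piFinSuccAbove, Fin.insertNth_apply_succAbove, Fin.tail, Fin.removeNth]
        rfl
    rw [hcomp]
    exact ((mp.symm e).quasiMeasurePreserving.comp hP).comp mp.quasiMeasurePreserving

theorem aux_pi (n : ℕ) :
    ∀ (S : Fin n → Type) [∀ i, Group (S i)] [∀ i, TopologicalSpace (S i)]
      [∀ i, SecondCountableTopology (S i)]
      (Y : Fin n → Type) [∀ i, MeasurableSpace (Y i)] [∀ i, StandardBorelSpace (Y i)]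
      (ν : ∀ i, Measure (Y i)) [∀ i, SigmaFinite (ν i)] [∀ i, MulAction (S i) (Y i)],
      (∀ i, ∀ s : S i, Measure.QuasiMeasurePreserving (fun y : Y i => s • y) (ν i) (ν i)) →
      (∀ i, MetricallyErgodic (S i) (Y i) (ν i)) →
      MetricallyErgodic (∀ i, S i) (∀ i, Y i) (Measure.pi ν) := by
  induction n with
  | zero =>
    intro S _ _ _ Y _ _ ν _ _ hq hme
    intro V _ _ _ _ hsep hC hiso f hf heq
    refine ⟨f default, Eventually.of_forall fun y => ?_⟩
    rw [Unique.eq_default y]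
  | succ n IH =>
    intro S _ _ _ Y _ _ ν _ _ hq hme
    have hYne : ∀ i, Nonempty (Y i) := fun i => nonempty_of_me (hme i)
    set e := MeasurableEquiv.piFinSuccAbove Y 0 with he_def
    have mp := measurePreserving_piFinSuccAbove ν 0
    have hme₂ := IH (fun j => S ((0 : Fin (n+1)).succAbove j))
      (fun j => Y ((0 : Fin (n+1)).succAbove j))
      (fun j => ν ((0 : Fin (n+1)).succAbove j)) (fun j => hq _) (fun j => hme _)
    -- the monoid hom from the pair group to the pi group
    set ρ' : (S 0 × ∀ j, S ((0 : Fin (n+1)).succAbove j)) →* (∀ i, S i) :=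
      { toFun := fun p => (0 : Fin (n+1)).insertNth p.1 p.2
        map_one' := by
          apply funext
          refine Fin.succAboveCases 0 ?_ ?_
          · simp only [Fin.insertNth_apply_same, Fin.insertNth_apply_succAbove, Pi.mul_apply, Pi.one_apply, Prod.fst_mul, Prod.snd_mul, Prod.fst_one, Prod.snd_one]
          · intro j
            simp only [Fin.insertNth_apply_same, Fin.insertNth_apply_succAbove, Pi.mul_apply, Pi.one_apply, Prod.fst_mul, Prod.snd_mul, Prod.fst_one, Prod.snd_one]
        map_mul' := fun p q => by
          apply funext
          refine Fin.succAboveCases 0 ?_ ?_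
          · simp only [Fin.insertNth_apply_same, Fin.insertNth_apply_succAbove, Pi.mul_apply, Pi.one_apply, Prod.fst_mul, Prod.snd_mul, Prod.fst_one, Prod.snd_one]
          · intro j
            simp only [Fin.insertNth_apply_same, Fin.insertNth_apply_succAbove, Pi.mul_apply, Pi.one_apply, Prod.fst_mul, Prod.snd_mul, Prod.fst_one, Prod.snd_one] } with hρ'_def
    have hρ'cont : Continuous ρ' := by
      refine continuous_pi ?_
      refine Fin.succAboveCases 0 ?_ ?_
      · simp only [hρ'_def, MonoidHom.coe_mk, OneHom.coe_mk, Fin.insertNth_apply_same]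
        exact continuous_fst
      · intro j
        simp only [hρ'_def, MonoidHom.coe_mk, OneHom.coe_mk, Fin.insertNth_apply_succAbove]
        exact (continuous_apply j).comp continuous_snd
    -- now prove metric ergodicity
    intro V _ _ _ _ hsep hC hiso f hf heq
    letI : MulAction (S 0 × ∀ j, S ((0 : Fin (n+1)).succAbove j)) V :=
      MulAction.compHom V ρ'
    have hsmulV : ∀ (p : S 0 × ∀ j, S ((0 : Fin (n+1)).succAbove j)) (v : V),
        p • v = ρ' p • v := fun p v => rfl
    have hC' : Continuous fun q : (S 0 × ∀ j, S ((0 : Fin (n+1)).succAbove j)) × V =>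
        q.1 • q.2 := by
      simp only [hsmulV]
      exact hC.comp ((hρ'cont.comp continuous_fst).prodMk continuous_snd)
    have hiso' : ∀ p : S 0 × ∀ j, S ((0 : Fin (n+1)).succAbove j),
        Isometry fun v : V => p • v := by
      intro p
      simp only [hsmulV]
      exact hiso (ρ' p)
    -- equivariance of e.symm
    have hesymm : ∀ (p : S 0 × ∀ j, S ((0 : Fin (n+1)).succAbove j))
        (q : Y 0 × ∀ j, Y ((0 : Fin (n+1)).succAbove j)),
        e.symm (p.1 • q.1, fun j => p.2 j • q.2 j) = ρ' p • e.symm q := by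
      intro p q
      apply funext
      refine Fin.succAboveCases 0 ?_ ?_
      · show ((0 : Fin (n+1)).insertNth (p.1 • q.1) (fun j => p.2 j • q.2 j)) 0
          = ((0 : Fin (n+1)).insertNth p.1 p.2 0) • ((0 : Fin (n+1)).insertNth q.1 q.2 0)
        simp only [Fin.insertNth_apply_same]
      · intro j
        show ((0 : Fin (n+1)).insertNth (p.1 • q.1) (fun j => p.2 j • q.2 j))
            ((0 : Fin (n+1)).succAbove j)
          = ((0 : Fin (n+1)).insertNth p.1 p.2 ((0 : Fin (n+1)).succAbove j)) •
            ((0 : Fin (n+1)).insertNth q.1 q.2 ((0 : Fin (n+1)).succAbove j))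
        simp only [Fin.insertNth_apply_succAbove]
    have heq' : ∀ s : S 0 × ∀ j, S ((0 : Fin (n+1)).succAbove j),
        ∀ᵐ q ∂(ν 0).prod (Measure.pi fun j => ν ((0 : Fin (n+1)).succAbove j)),
          (f ∘ e.symm) (s.1 • q.1, s.2 • q.2) = s • (f ∘ e.symm) q := by
      intro s
      have h1 := heq (ρ' s)
      have h2 := (mp.symm e).quasiMeasurePreserving.ae h1
      refine h2.mono fun q hq2 => ?_
      show f (e.symm (s.1 • q.1, s.2 • q.2)) = s • f (e.symm q)
      rw [hsmulV]
      have h3 : (s.2 • q.2 : ∀ j, Y ((0 : Fin (n+1)).succAbove j)) = fun j => s.2 j • q.2 j := rfl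
      rw [h3, hesymm s q]
      exact hq2
    obtain ⟨v, hv⟩ := twoFactor (ν 0) (Measure.pi fun j => ν ((0 : Fin (n+1)).succAbove j))
      (fun σ => qmp_pi n _ _ (fun j => (σ j • ·)) (fun j => hq _ (σ j)))
      (hme 0) hme₂ (hYne 0) ⟨fun j => (hYne _).some⟩ V hsep hC' hiso'
      (f ∘ e.symm) (hf.comp e.symm.measurable) heq'
    refine ⟨v, ?_⟩
    have := mp.quasiMeasurePreserving.ae hv
    refine this.mono fun y hy => ?_
    exact (congrArg f (e.symm_apply_apply y)).symm.trans hy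

end ME

/-- If for each `i` the lcsc group `Sᵢ` acts measurably, measure-class-preservingly and
metrically ergodically on a σ-finite standard measure space `(Yᵢ, νᵢ)`, then the
coordinatewise product action of `S₁ × ⋯ × Sₙ` on `(Y₁ × ⋯ × Yₙ, ν₁ × ⋯ × νₙ)` is
metrically ergodic. -/
theorem metricallyErgodic_pi
    (n : ℕ) (S : Fin n → Type) [∀ i, Group (S i)] [∀ i, TopologicalSpace (S i)]
    [∀ i, IsTopologicalGroup (S i)] [∀ i, LocallyCompactSpace (S i)]
    [∀ i, SecondCountableTopology (S i)]
    (Y : Fin n → Type) [∀ i, MeasurableSpace (Y i)] [∀ i, StandardBorelSpace (Y i)]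
    (ν : ∀ i, Measure (Y i)) [∀ i, SigmaFinite (ν i)]
    [∀ i, MulAction (S i) (Y i)]
    (hmeas : ∀ i, ∀ s : S i, Measurable fun y : Y i => s • y)
    (hqmp : ∀ i, ∀ s : S i,
      Measure.QuasiMeasurePreserving (fun y : Y i => s • y) (ν i) (ν i))
    (hme : ∀ i, MetricallyErgodic (S i) (Y i) (ν i)) :
    MetricallyErgodic (∀ i, S i) (∀ i, Y i) (Measure.pi ν) :=
  ME.aux_pi n S Y ν hqmp hme
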